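/- arXiv:2411.02023 — 2 statements merged into one kernel-verified Lean document; each statement's English description precedes it below -/
import Mathlib

section
/- Let Φ: R → R be convex and non-increasing, U₁, U₀ random vectors in R^d, ρ ∈ [0,1], and Π a symmetric positive semidefinite d×d matrix. Then the performative risk PR(θ) = ρ E[Φ(U₁ᵀθ)] + (1−ρ) E[Φ(−(U₀ + Πθ)ᵀθ)] is convex in θ. -/
open MeasureTheory ProbabilityTheory Matrix Set

lemma quad_convex_aux {d : ℕ} (P : Matrix (Fin d) (Fin d) ℝ) (hP : P.PosSemidef)
    (x y : Fin d → ℝ) {a b : ℝ} (ha : 0 ≤ a) (hb : 0 ≤ b) (hab : a + b = 1) :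
    P.mulVec (a • x + b • y) ⬝ᵥ (a • x + b • y)
      ≤ a * (P.mulVec x ⬝ᵥ x) + b * (P.mulVec y ⬝ᵥ y) := by
  have hsymm : ∀ u v : Fin d → ℝ, P.mulVec u ⬝ᵥ v = P.mulVec v ⬝ᵥ u := by
    intro u v
    calc P.mulVec u ⬝ᵥ v = v ⬝ᵥ P.mulVec u := dotProduct_comm _ _
      _ = P.vecMul v ⬝ᵥ u := Matrix.dotProduct_mulVec _ _ _
      _ = Pᵀ.mulVec v ⬝ᵥ u := by rw [Matrix.mulVec_transpose]
      _ = P.mulVec v ⬝ᵥ u := by rw [show Pᵀ = P from hP.1]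
  have hpos : 0 ≤ P.mulVec (x - y) ⬝ᵥ (x - y) := by
    have := hP.dotProduct_mulVec_nonneg (x - y)
    simpa [Matrix.dotProduct_mulVec, Matrix.vecMul_transpose,
      ← Matrix.mulVec_transpose, show Pᵀ = P from hP.1, hsymm] using this
  have hexp : P.mulVec (x - y) ⬝ᵥ (x - y)
      = P.mulVec x ⬝ᵥ x - 2 * (P.mulVec x ⬝ᵥ y) + P.mulVec y ⬝ᵥ y := by
    simp only [sub_eq_add_neg, Matrix.mulVec_add, Matrix.mulVec_neg,
      add_dotProduct, neg_dotProduct, dotProduct_add,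
      dotProduct_neg]
    rw [hsymm y x]
    ring
  have hlhs : P.mulVec (a • x + b • y) ⬝ᵥ (a • x + b • y)
      = a * a * (P.mulVec x ⬝ᵥ x) + 2 * (a * b) * (P.mulVec x ⬝ᵥ y)
        + b * b * (P.mulVec y ⬝ᵥ y) := by
    simp only [Matrix.mulVec_add, Matrix.mulVec_smul, add_dotProduct,
      smul_dotProduct, dotProduct_add, dotProduct_smul,
      smul_eq_mul]
    rw [hsymm y x]
    ring
  have hb' : b = 1 - a := by linarith
  subst hb'
  have key := mul_nonneg (mul_nonneg ha hb) hpos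
  rw [hexp] at key
  rw [hlhs]
  nlinarith [key]

/-- Convexity of the classification performative risk: for `Φ` convex and
non-increasing, `ρ ∈ [0,1]` and `Π` symmetric positive semidefinite, the performative
risk `PR(θ) = ρ E[Φ(U₁ᵀθ)] + (1-ρ) E[Φ(-(U₀ + Πθ)ᵀθ)]` is convex in `θ`. -/
theorem classification_performative_risk_convex
    {Ω : Type*} [MeasureSpace Ω] [IsProbabilityMeasure (ℙ : Measure Ω)]
    {d : ℕ} (Φ : ℝ → ℝ) (hΦconv : ConvexOn ℝ univ Φ) (hΦmono : Antitone Φ)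
    (U1 U0 : Ω → (Fin d → ℝ)) (ρ : ℝ) (hρ : ρ ∈ Icc (0 : ℝ) 1)
    (P : Matrix (Fin d) (Fin d) ℝ) (hP : P.PosSemidef)
    (hint1 : ∀ θ : Fin d → ℝ, Integrable (fun ω => Φ (U1 ω ⬝ᵥ θ)))
    (hint0 : ∀ θ : Fin d → ℝ,
      Integrable (fun ω => Φ (-((U0 ω + P.mulVec θ) ⬝ᵥ θ)))) :
    ConvexOn ℝ univ (fun θ : Fin d → ℝ =>
      ρ * (∫ ω, Φ (U1 ω ⬝ᵥ θ))
        + (1 - ρ) * (∫ ω, Φ (-((U0 ω + P.mulVec θ) ⬝ᵥ θ)))) := by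
  refine ⟨convex_univ, ?_⟩
  intro x _ y _ a b ha hb hab
  simp only [smul_eq_mul]
  -- pointwise bounds
  have hpt1 : ∀ ω, Φ (U1 ω ⬝ᵥ (a • x + b • y))
      ≤ a * Φ (U1 ω ⬝ᵥ x) + b * Φ (U1 ω ⬝ᵥ y) := by
    intro ω
    have : U1 ω ⬝ᵥ (a • x + b • y) = a • (U1 ω ⬝ᵥ x) + b • (U1 ω ⬝ᵥ y) := by
      simp [dotProduct_add, dotProduct_smul]
    rw [this]
    simpa using hΦconv.2 (mem_univ _) (mem_univ _) ha hb hab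
  have hpt0 : ∀ ω, Φ (-((U0 ω + P.mulVec (a • x + b • y)) ⬝ᵥ (a • x + b • y)))
      ≤ a * Φ (-((U0 ω + P.mulVec x) ⬝ᵥ x)) + b * Φ (-((U0 ω + P.mulVec y) ⬝ᵥ y)) := by
    intro ω
    have hq : (U0 ω + P.mulVec (a • x + b • y)) ⬝ᵥ (a • x + b • y)
        ≤ a * ((U0 ω + P.mulVec x) ⬝ᵥ x) + b * ((U0 ω + P.mulVec y) ⬝ᵥ y) := by
      have hlin : U0 ω ⬝ᵥ (a • x + b • y) = a * (U0 ω ⬝ᵥ x) + b * (U0 ω ⬝ᵥ y) := by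
        simp [dotProduct_add, dotProduct_smul, smul_eq_mul]
      have hquad := quad_convex_aux P hP x y ha hb hab
      simp only [add_dotProduct]
      nlinarith [hquad, hlin]
    calc Φ (-((U0 ω + P.mulVec (a • x + b • y)) ⬝ᵥ (a • x + b • y)))
        ≤ Φ (-(a * ((U0 ω + P.mulVec x) ⬝ᵥ x) + b * ((U0 ω + P.mulVec y) ⬝ᵥ y))) :=
          hΦmono (by linarith)
      _ = Φ (a • (-((U0 ω + P.mulVec x) ⬝ᵥ x)) + b • (-((U0 ω + P.mulVec y) ⬝ᵥ y))) := by
          congr 1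
          simp [smul_eq_mul]
          ring
      _ ≤ a * Φ (-((U0 ω + P.mulVec x) ⬝ᵥ x)) + b * Φ (-((U0 ω + P.mulVec y) ⬝ᵥ y)) := by
          simpa using hΦconv.2 (mem_univ _) (mem_univ _) ha hb hab
  -- integrate
  have hI1 : (∫ ω, Φ (U1 ω ⬝ᵥ (a • x + b • y)))
      ≤ a * (∫ ω, Φ (U1 ω ⬝ᵥ x)) + b * (∫ ω, Φ (U1 ω ⬝ᵥ y)) := by
    rw [← integral_const_mul, ← integral_const_mul,
      ← integral_add ((hint1 x).const_mul a) ((hint1 y).const_mul b)]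
    exact integral_mono (hint1 _) (((hint1 x).const_mul a).add ((hint1 y).const_mul b)) hpt1
  have hI0 : (∫ ω, Φ (-((U0 ω + P.mulVec (a • x + b • y)) ⬝ᵥ (a • x + b • y))))
      ≤ a * (∫ ω, Φ (-((U0 ω + P.mulVec x) ⬝ᵥ x)))
        + b * (∫ ω, Φ (-((U0 ω + P.mulVec y) ⬝ᵥ y))) := by
    rw [← integral_const_mul, ← integral_const_mul,
      ← integral_add ((hint0 x).const_mul a) ((hint0 y).const_mul b)]
    exact integral_mono (hint0 _) (((hint0 x).const_mul a).add ((hint0 y).const_mul b)) hpt0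
  have hρ0 : (0:ℝ) ≤ ρ := hρ.1
  have hρ1 : (0:ℝ) ≤ 1 - ρ := by linarith [hρ.2]
  nlinarith [mul_le_mul_of_nonneg_left hI1 hρ0, mul_le_mul_of_nonneg_left hI0 hρ1]
end

section
/- Under the assumptions of the variational formulation theorem (Φ convex non-increasing, Π symmetric positive definite, linear classifier, linear shift on class 0), the performative risk satisfies PR(θ) = ρ E[Φ(U₁ᵀθ)] + (1−ρ) E[max_{‖ΔU₀‖_{Π⁻¹} ≤ ‖θ‖_Π} Φ(−(U₀+ΔU₀)ᵀθ)]. -/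
open MeasureTheory ProbabilityTheory Matrix Set

lemma psd_cauchy {d : ℕ} {M : Matrix (Fin d) (Fin d) ℝ} (hM : M.PosSemidef)
    (x y : Fin d → ℝ) :
    x ⬝ᵥ M.mulVec y ≤ Real.sqrt (x ⬝ᵥ M.mulVec x) * Real.sqrt (y ⬝ᵥ M.mulVec y) := by
  have hsym : ∀ u v : Fin d → ℝ, u ⬝ᵥ M.mulVec v = v ⬝ᵥ M.mulVec u := by
    intro u v
    rw [Matrix.dotProduct_mulVec, ← Matrix.mulVec_transpose]
    have : Mᵀ = M := by
      have := hM.isHermitian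
      simpa [Matrix.IsHermitian, Matrix.conjTranspose_eq_transpose_of_trivial] using this
    rw [this, dotProduct_comm]
  have key : ∀ t : ℝ, 0 ≤ (y ⬝ᵥ M.mulVec y) * (t * t)
      + (2 * (x ⬝ᵥ M.mulVec y)) * t + x ⬝ᵥ M.mulVec x := by
    intro t
    have h0 : 0 ≤ (x + t • y) ⬝ᵥ M.mulVec (x + t • y) := by
      simpa using hM.dotProduct_mulVec_nonneg (x + t • y)
    have : (x + t • y) ⬝ᵥ M.mulVec (x + t • y)
        = (y ⬝ᵥ M.mulVec y) * (t * t) + (2 * (x ⬝ᵥ M.mulVec y)) * t + x ⬝ᵥ M.mulVec x := by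
      simp [Matrix.mulVec_add, Matrix.mulVec_smul, add_dotProduct,
        dotProduct_add, smul_dotProduct, dotProduct_smul,
        smul_eq_mul, hsym y x]
      ring
    rw [this] at h0
    exact h0
  have hdisc := discrim_le_zero key
  rw [discrim] at hdisc
  have hsq : (x ⬝ᵥ M.mulVec y) ^ 2 ≤ (x ⬝ᵥ M.mulVec x) * (y ⬝ᵥ M.mulVec y) := by
    nlinarith [hdisc]
  calc x ⬝ᵥ M.mulVec y ≤ |x ⬝ᵥ M.mulVec y| := le_abs_self _
    _ = Real.sqrt ((x ⬝ᵥ M.mulVec y) ^ 2) := (Real.sqrt_sq_eq_abs _).symm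
    _ ≤ Real.sqrt ((x ⬝ᵥ M.mulVec x) * (y ⬝ᵥ M.mulVec y)) := Real.sqrt_le_sqrt hsq
    _ = _ := Real.sqrt_mul (by simpa using hM.dotProduct_mulVec_nonneg x) _

/-- Variational (adversarial) formulation of the performative risk: for `Φ` convex
non-increasing and `Π` symmetric positive definite,
`PR(θ) = ρ E[Φ(U₁ᵀθ)] + (1-ρ) E[Φ(-(U₀+Πθ)ᵀθ)]` equals
`ρ E[Φ(U₁ᵀθ)] + (1-ρ) E[ max_{‖ΔU₀‖_{Π⁻¹} ≤ ‖θ‖_Π} Φ(-(U₀+ΔU₀)ᵀθ) ]`. -/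
theorem performative_risk_variational_form
    {Ω : Type*} [MeasureSpace Ω] [IsProbabilityMeasure (ℙ : Measure Ω)]
    {d : ℕ} (Φ : ℝ → ℝ) (hΦconv : ConvexOn ℝ univ Φ) (hΦmono : Antitone Φ)
    (ρ : ℝ) (hρ : ρ ∈ Icc (0 : ℝ) 1)
    (P : Matrix (Fin d) (Fin d) ℝ) (hP : P.PosDef)
    (U1 U0 : Ω → (Fin d → ℝ)) (θ : Fin d → ℝ) :
    ρ * (∫ ω, Φ (U1 ω ⬝ᵥ θ))
        + (1 - ρ) * (∫ ω, Φ (-((U0 ω + P.mulVec θ) ⬝ᵥ θ))) =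
      ρ * (∫ ω, Φ (U1 ω ⬝ᵥ θ))
        + (1 - ρ) * (∫ ω, sSup {x : ℝ | ∃ Δ : Fin d → ℝ,
            Real.sqrt (Δ ⬝ᵥ P⁻¹.mulVec Δ) ≤ Real.sqrt (θ ⬝ᵥ P.mulVec θ) ∧
              x = Φ (-((U0 ω + Δ) ⬝ᵥ θ))}) := by
  have hPinv : P⁻¹ * P = 1 := Matrix.nonsing_inv_mul P (isUnit_iff_ne_zero.mpr hP.det_pos.ne')
  have hinvPθ : P⁻¹.mulVec (P.mulVec θ) = θ := by
    rw [Matrix.mulVec_mulVec, hPinv, Matrix.one_mulVec]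
  have hnorm : (P.mulVec θ) ⬝ᵥ P⁻¹.mulVec (P.mulVec θ) = θ ⬝ᵥ P.mulVec θ := by
    rw [hinvPθ, dotProduct_comm]
  have hθP : 0 ≤ θ ⬝ᵥ P.mulVec θ := by simpa using hP.posSemidef.dotProduct_mulVec_nonneg θ
  congr 2
  refine MeasureTheory.integral_congr_ae (Filter.Eventually.of_forall fun ω => ?_)
  have hgreat : IsGreatest {x : ℝ | ∃ Δ : Fin d → ℝ,
      Real.sqrt (Δ ⬝ᵥ P⁻¹.mulVec Δ) ≤ Real.sqrt (θ ⬝ᵥ P.mulVec θ) ∧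
        x = Φ (-((U0 ω + Δ) ⬝ᵥ θ))} (Φ (-((U0 ω + P.mulVec θ) ⬝ᵥ θ))) := by
    constructor
    · exact ⟨P.mulVec θ, by rw [hnorm], rfl⟩
    · rintro x ⟨Δ, hΔ, rfl⟩
      apply hΦmono
      have hCS : Δ ⬝ᵥ θ ≤ θ ⬝ᵥ P.mulVec θ := by
        have h1 : Δ ⬝ᵥ θ = Δ ⬝ᵥ P⁻¹.mulVec (P.mulVec θ) := by rw [hinvPθ]
        have h2 := psd_cauchy hP.inv.posSemidef Δ (P.mulVec θ)
        rw [hnorm] at h2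
        calc Δ ⬝ᵥ θ ≤ Real.sqrt (Δ ⬝ᵥ P⁻¹.mulVec Δ) * Real.sqrt (θ ⬝ᵥ P.mulVec θ) := by
              rw [h1]; exact h2
          _ ≤ Real.sqrt (θ ⬝ᵥ P.mulVec θ) * Real.sqrt (θ ⬝ᵥ P.mulVec θ) := by
              exact mul_le_mul_of_nonneg_right hΔ (Real.sqrt_nonneg _)
          _ = θ ⬝ᵥ P.mulVec θ := Real.mul_self_sqrt hθP
      have : -((U0 ω + P.mulVec θ) ⬝ᵥ θ) ≤ -((U0 ω + Δ) ⬝ᵥ θ) := by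
        simp only [add_dotProduct, neg_add, neg_le_neg_iff]
        have : (P.mulVec θ) ⬝ᵥ θ = θ ⬝ᵥ P.mulVec θ := dotProduct_comm _ _
        linarith [hCS, this.ge]
      exact this
  exact (hgreat.csSup_eq).symm
end
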